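/- Let a : ℕ → ℝ satisfy: a(n) → +∞, a(n+1) − a(n) → 0, and for every r ∈ (0,1), sup_{s ∈ [rn, n]} |a(n) − a(s)| → 0 as n → ∞ (s ranging over integers). Suppose (N_k) is a sequence with N_k → ∞ and {a(N_k)} → α ∈ (0,1). Then the averages of Dirac masses (1/N_k) ∑_{n=1}^{N_k} δ_{{a(n)}} converge weak-star to the point mass δ_α on [0,1]. -/

import Mathlib

set_option maxHeartbeats 1000000


open Filter

lemma fract_shift (x t : ℝ) (h0 : 0 ≤ Int.fract x + t) (h1 : Int.fract x + t < 1) :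
    Int.fract (x + t) = Int.fract x + t := by
  have hx : x + t = (⌊x⌋ : ℝ) + (Int.fract x + t) := by
    rw [Int.fract]; ring
  rw [hx, Int.fract_intCast_add, Int.fract_eq_self.mpr ⟨h0, h1⟩]

/-- If `a(n) → ∞`, consecutive gaps tend to `0`, `a` is asymptotically
constant on intervals `[rn, n]`, and `{a(N_k)} → α ∈ (0,1)` along `N_k → ∞`, then the
empirical measures `(1/N_k) ∑_{n≤N_k} δ_{{a(n)}}` converge weak-star to `δ_α`. -/
theorem stmt11 (a : ℕ → ℝ)
    (hinf : Tendsto (fun n : ℕ => a n) atTop atTop)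
    (hgap : Tendsto (fun n : ℕ => a (n + 1) - a n) atTop (nhds 0))
    (hsup : ∀ r ∈ Set.Ioo (0:ℝ) 1, ∀ ε > 0, ∀ᶠ n : ℕ in atTop,
      ∀ s : ℕ, r * n ≤ (s : ℝ) → s ≤ n → |a n - a s| < ε)
    (Nk : ℕ → ℕ) (hNk : Tendsto Nk atTop atTop)
    (α : ℝ) (hα : α ∈ Set.Ioo (0:ℝ) 1)
    (hfr : Tendsto (fun k => Int.fract (a (Nk k))) atTop (nhds α)) :
    ∀ f : ℝ → ℝ, ContinuousOn f (Set.Icc 0 1) →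
      Tendsto (fun k => (Nk k : ℝ)⁻¹ * ∑ n ∈ Finset.Icc 1 (Nk k), f (Int.fract (a n)))
        atTop (nhds (f α)) := by
  intro f hf
  obtain ⟨C, hC⟩ := isCompact_Icc.exists_bound_of_continuousOn hf
  set M := max C 1 with hM
  have hMpos : (0:ℝ) < M := lt_of_lt_of_le one_pos (le_max_right _ _)
  have hMb : ∀ x ∈ Set.Icc (0:ℝ) 1, |f x| ≤ M := fun x hx =>
    le_trans (by simpa [Real.norm_eq_abs] using hC x hx) (le_max_left _ _)
  have hα0 : (0:ℝ) < α := hα.1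
  have hα1 : α < 1 := hα.2
  have hαI : α ∈ Set.Icc (0:ℝ) 1 := ⟨hα0.le, hα1.le⟩
  rw [Metric.tendsto_nhds]
  intro ε hε
  -- continuity at α
  have hcw : ContinuousWithinAt f (Set.Icc 0 1) α := hf α hαI
  obtain ⟨δ, hδ, hδf⟩ := Metric.continuousWithinAt_iff.mp hcw (ε/4) (by positivity)
  set η := min δ (min α (1 - α)) / 2 with hηdef
  have hmin1 : min δ (min α (1 - α)) ≤ δ := min_le_left _ _
  have hmin2 : min δ (min α (1 - α)) ≤ α := le_trans (min_le_right _ _) (min_le_left _ _)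
  have hmin3 : min δ (min α (1 - α)) ≤ 1 - α := le_trans (min_le_right _ _) (min_le_right _ _)
  have hminpos : 0 < min δ (min α (1 - α)) := lt_min hδ (lt_min hα0 (by linarith))
  have hη : 0 < η := by simp only [hηdef]; linarith
  set r := min (1/2 : ℝ) (ε / (8 * M)) with hr
  have hr0 : 0 < r := lt_min (by norm_num) (by positivity)
  have hr1 : r < 1 := lt_of_le_of_lt (min_le_left _ _) (by norm_num)
  have hrε : r ≤ ε / (8 * M) := min_le_right _ _
  have E2 := hNk.eventually (hsup r ⟨hr0, hr1⟩ (η/2) (by linarith))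
  have E1 : ∀ᶠ k in atTop, |Int.fract (a (Nk k)) - α| < η/2 := by
    have := Metric.tendsto_nhds.mp hfr (η/2) (by linarith)
    simpa [Real.dist_eq] using this
  have E3 : ∀ᶠ k in atTop, 1 ≤ Nk k := hNk.eventually_ge_atTop 1
  filter_upwards [E1, E2, E3] with k h1 h2 h3
  set N := Nk k with hN
  have hNpos : (0:ℝ) < (N:ℝ) := by exact_mod_cast h3
  -- key pointwise estimate on the tail
  have key : ∀ n : ℕ, r * (N:ℝ) ≤ (n:ℝ) → n ≤ N →
      dist (f (Int.fract (a n))) (f α) < ε/4 := by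
    intro n hn1 hn2
    have hdiff : |a N - a n| < η/2 := h2 n hn1 hn2
    set t := a n - a N with ht
    have habs : |t| < η/2 := by rw [ht, abs_sub_comm]; exact hdiff
    have habs' : -(η/2) < t ∧ t < η/2 := abs_lt.mp habs
    have hfx : -(η/2) < Int.fract (a N) - α ∧ Int.fract (a N) - α < η/2 := abs_lt.mp h1
    have hηα : 2 * η ≤ min δ (min α (1 - α)) := by simp only [hηdef]; linarith
    have h0 : 0 ≤ Int.fract (a N) + t := by linarith
    have h1' : Int.fract (a N) + t < 1 := by linarith
    have hfr' : Int.fract (a n) = Int.fract (a N) + t := by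
      have : a n = a N + t := by rw [ht]; ring
      rw [this, fract_shift _ _ h0 h1']
    have hclose : |Int.fract (a n) - α| < δ := by
      rw [hfr']
      have : |Int.fract (a N) + t - α| ≤ |Int.fract (a N) - α| + |t| := by
        have := abs_add_le (Int.fract (a N) - α) t
        rw [show Int.fract (a N) + t - α = Int.fract (a N) - α + t by ring]; exact this
      have hηδ : η < δ := by
        have : 2 * η ≤ δ := le_trans hηα hmin1
        linarith
      linarith [h1, habs]
    have hmem : Int.fract (a n) ∈ Set.Icc (0:ℝ) 1 :=
      ⟨Int.fract_nonneg _, (Int.fract_lt_one _).le⟩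
    exact hδf hmem (by rwa [Real.dist_eq])
  -- set up the split of the sum
  set m := ⌈r * (N:ℝ)⌉₊ with hm
  have hm1 : 1 ≤ m := Nat.ceil_pos.mpr (by positivity)
  have hmN : m ≤ N := Nat.ceil_le.mpr (by nlinarith)
  have hmcast : ((m - 1 : ℕ) : ℝ) ≤ r * (N:ℝ) := by
    have hlt : ((m:ℝ)) < r * (N:ℝ) + 1 := Nat.ceil_lt_add_one (by positivity)
    have : ((m - 1 : ℕ) : ℝ) = (m:ℝ) - 1 := by
      rw [Nat.cast_sub hm1, Nat.cast_one]
    linarith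
  set S := ∑ n ∈ Finset.Icc 1 N, f (Int.fract (a n)) with hS
  have hcard : (Finset.Icc 1 N).card = N := by
    rw [Nat.card_Icc]; omega
  have hsplit : S - (N:ℝ) * f α = ∑ n ∈ Finset.Icc 1 N, (f (Int.fract (a n)) - f α) := by
    rw [Finset.sum_sub_distrib, Finset.sum_const, hcard]
    simp [nsmul_eq_mul, hS]
  -- bound the sum of absolute values
  have hIcc : Finset.Icc 1 N = Finset.Ioc 0 N := by
    ext x; simp [Nat.lt_iff_add_one_le]
  have hsum_split :
      ∑ n ∈ Finset.Ioc 0 (m-1), |f (Int.fract (a n)) - f α|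
        + ∑ n ∈ Finset.Ioc (m-1) N, |f (Int.fract (a n)) - f α|
      = ∑ n ∈ Finset.Ioc 0 N, |f (Int.fract (a n)) - f α| :=
    Finset.sum_Ioc_consecutive _ (Nat.zero_le _) (by omega)
  have hb1 : ∑ n ∈ Finset.Ioc 0 (m-1), |f (Int.fract (a n)) - f α|
      ≤ ((m-1 : ℕ) : ℝ) * (2 * M) := by
    have : ∀ n ∈ Finset.Ioc 0 (m-1), |f (Int.fract (a n)) - f α| ≤ 2 * M := by
      intro n _
      have h1 := hMb (Int.fract (a n)) ⟨Int.fract_nonneg _, (Int.fract_lt_one _).le⟩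
      have h2 := hMb α hαI
      calc |f (Int.fract (a n)) - f α| ≤ |f (Int.fract (a n))| + |f α| := abs_sub _ _
        _ ≤ 2 * M := by linarith
    calc ∑ n ∈ Finset.Ioc 0 (m-1), |f (Int.fract (a n)) - f α|
        ≤ ∑ _n ∈ Finset.Ioc 0 (m-1), (2 * M) := Finset.sum_le_sum this
      _ = ((m-1:ℕ):ℝ) * (2 * M) := by
          rw [Finset.sum_const, Nat.card_Ioc, nsmul_eq_mul]
          norm_num
  have hb2 : ∑ n ∈ Finset.Ioc (m-1) N, |f (Int.fract (a n)) - f α|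
      ≤ (N:ℝ) * (ε/4) := by
    have hterm : ∀ n ∈ Finset.Ioc (m-1) N, |f (Int.fract (a n)) - f α| ≤ ε/4 := by
      intro n hn
      rw [Finset.mem_Ioc] at hn
      have hmn : m ≤ n := by omega
      have hrn : r * (N:ℝ) ≤ (n:ℝ) := by
        calc r * (N:ℝ) ≤ (m:ℝ) := Nat.le_ceil _
          _ ≤ (n:ℝ) := by exact_mod_cast hmn
      have := key n hrn hn.2
      rw [Real.dist_eq] at this
      linarith
    calc ∑ n ∈ Finset.Ioc (m-1) N, |f (Int.fract (a n)) - f α|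
        ≤ ∑ _n ∈ Finset.Ioc (m-1) N, (ε/4) := Finset.sum_le_sum hterm
      _ = ((N - (m-1) : ℕ):ℝ) * (ε/4) := by
          rw [Finset.sum_const, Nat.card_Ioc, nsmul_eq_mul]
      _ ≤ (N:ℝ) * (ε/4) := by
          have : ((N - (m-1) : ℕ):ℝ) ≤ (N:ℝ) := by exact_mod_cast Nat.sub_le _ _
          nlinarith
  have habs_sum : |S - (N:ℝ) * f α| ≤ (N:ℝ) * (ε/2) := by
    rw [hsplit, hIcc]
    calc |∑ n ∈ Finset.Ioc 0 N, (f (Int.fract (a n)) - f α)|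
        ≤ ∑ n ∈ Finset.Ioc 0 N, |f (Int.fract (a n)) - f α| := Finset.abs_sum_le_sum_abs _ _
      _ = ∑ n ∈ Finset.Ioc 0 (m-1), |f (Int.fract (a n)) - f α|
            + ∑ n ∈ Finset.Ioc (m-1) N, |f (Int.fract (a n)) - f α| := hsum_split.symm
      _ ≤ ((m-1:ℕ):ℝ) * (2*M) + (N:ℝ) * (ε/4) := add_le_add hb1 hb2
      _ ≤ r * (N:ℝ) * (2*M) + (N:ℝ) * (ε/4) := by
          have := mul_le_mul_of_nonneg_right hmcast (by positivity : (0:ℝ) ≤ 2*M)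
          linarith
      _ ≤ (N:ℝ) * (ε/2) := by
          have h1 : r * (2*M) ≤ ε/4 := by
            have h2 := mul_le_mul_of_nonneg_right hrε (by positivity : (0:ℝ) ≤ 2*M)
            have h3 : (ε/(8*M)) * (2*M) = ε/4 := by
              field_simp
              ring
            linarith
          nlinarith [mul_le_mul_of_nonneg_left h1 hNpos.le]
  have hfinal : dist ((N:ℝ)⁻¹ * S) (f α) ≤ ε/2 := by
    rw [Real.dist_eq]
    have heq : (N:ℝ)⁻¹ * S - f α = (N:ℝ)⁻¹ * (S - (N:ℝ) * f α) := by
      rw [mul_sub, ← mul_assoc, inv_mul_cancel₀ hNpos.ne', one_mul]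
    rw [heq, abs_mul, abs_inv, abs_of_pos hNpos]
    calc ((N:ℝ))⁻¹ * |S - (N:ℝ) * f α| ≤ ((N:ℝ))⁻¹ * ((N:ℝ) * (ε/2)) := by
          apply mul_le_mul_of_nonneg_left habs_sum (by positivity)
      _ = ε/2 := by field_simp
  calc dist ((N:ℝ)⁻¹ * S) (f α) ≤ ε/2 := hfinal
    _ < ε := by linarith
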